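/- arXiv:1202.0619 — 3 statements merged into one kernel-verified Lean document; each statement's English description precedes it below -/
import Mathlib

section
/- Let c ≥ 0 and F a nonnegative measure on ℝ with c + ∫ x² dF(x) = 1. Define δ(u) = iuc + ∫ x(e^{iux} - 1) dF(x) for u ∈ ℝ. Then |δ(u)|² ≤ 2(u²c + 4∫ sin²(ux/2) dF(x)) and in particular |δ(u)| ≤ 2√2 (1 + |u|). -/
open Complex Real MeasureTheory

/-- Cauchy–Schwarz for Bochner integrals of real functions. -/
lemma cs_aux (F : Measure ℝ) (f g : ℝ → ℝ)
    (hf : Integrable (fun x => f x ^ 2) F) (hg : Integrable (fun x => g x ^ 2) F)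
    (hfg : Integrable (fun x => f x * g x) F) :
    (∫ x, f x * g x ∂F) ^ 2 ≤ (∫ x, f x ^ 2 ∂F) * ∫ x, g x ^ 2 ∂F := by
  set A := ∫ x, f x ^ 2 ∂F
  set B := ∫ x, f x * g x ∂F
  set C := ∫ x, g x ^ 2 ∂F
  have key : ∀ t : ℝ, 0 ≤ A * (t * t) + (2 * B) * t + C := by
    intro t
    have h1 : ∀ x, (t * f x + g x) ^ 2
        = t ^ 2 * f x ^ 2 + t * (2 * (f x * g x)) + g x ^ 2 := by
      intro x; ring
    have h0 : 0 ≤ ∫ x, (t * f x + g x) ^ 2 ∂F :=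
      integral_nonneg fun x => sq_nonneg _
    have ia : Integrable (fun x => t ^ 2 * f x ^ 2 + t * (2 * (f x * g x))) F :=
      (hf.const_mul _).add ((hfg.const_mul _).const_mul _)
    have h2 : (∫ x, (t * f x + g x) ^ 2 ∂F)
        = t ^ 2 * A + t * (2 * B) + C := by
      calc ∫ x, (t * f x + g x) ^ 2 ∂F
          = ∫ x, (t ^ 2 * f x ^ 2 + t * (2 * (f x * g x))) + g x ^ 2 ∂F := by
            simp_rw [h1]
        _ = (∫ x, t ^ 2 * f x ^ 2 + t * (2 * (f x * g x)) ∂F) + ∫ x, g x ^ 2 ∂F :=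
            integral_add ia hg
        _ = ((∫ x, t ^ 2 * f x ^ 2 ∂F) + ∫ x, t * (2 * (f x * g x)) ∂F) + C := by
            rw [integral_add (hf.const_mul _) ((hfg.const_mul _).const_mul _)]
        _ = t ^ 2 * A + t * (2 * B) + C := by
            rw [integral_const_mul, integral_const_mul, integral_const_mul]
    nlinarith [h0, h2]
  have hd := discrim_le_zero key
  rw [discrim] at hd
  nlinarith [hd]

set_option maxHeartbeats 1000000 in
theorem stmt4 (c : ℝ) (hc : 0 ≤ c) (F : Measure ℝ)
    (hF2 : Integrable (fun x => x ^ 2) F)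
    (hsum : c + ∫ x, x ^ 2 ∂F = 1) (u : ℝ)
    (hInt : Integrable (fun x : ℝ => (x : ℂ) * (Complex.exp (Complex.I * u * x) - 1)) F)
    (hsin : Integrable (fun x => Real.sin (u * x / 2) ^ 2) F) :
    ‖Complex.I * u * c + ∫ x, (x : ℂ) * (Complex.exp (Complex.I * u * x) - 1) ∂F‖ ^ 2
      ≤ 2 * (u ^ 2 * c + 4 * ∫ x, Real.sin (u * x / 2) ^ 2 ∂F) ∧
    ‖Complex.I * u * c + ∫ x, (x : ℂ) * (Complex.exp (Complex.I * u * x) - 1) ∂F‖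
      ≤ 2 * Real.sqrt 2 * (1 + |u|) := by
  have hx2 : 0 ≤ ∫ x, x ^ 2 ∂F := integral_nonneg fun x => sq_nonneg x
  have hcle : c ≤ 1 := by linarith
  have hx2le : (∫ x, x ^ 2 ∂F) ≤ 1 := by linarith
  have hsin0 : 0 ≤ ∫ x, Real.sin (u * x / 2) ^ 2 ∂F :=
    integral_nonneg fun x => sq_nonneg _
  -- pointwise norm identity
  have hnorm : ∀ x : ℝ, ‖Complex.exp (Complex.I * u * x) - 1‖ ^ 2
      = 4 * Real.sin (u * x / 2) ^ 2 := by
    intro x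
    have h2 : Real.sin (u * x / 2) ^ 2 = 1 / 2 - Real.cos (2 * (u * x / 2)) / 2 :=
      Real.sin_sq_eq_half_sub _
    have h3 : (2 : ℝ) * (u * x / 2) = u * x := by ring
    rw [h3] at h2
    have hre : (Complex.I * (u : ℂ) * (x : ℂ)).re = 0 := by simp
    have him : (Complex.I * (u : ℂ) * (x : ℂ)).im = u * x := by simp
    rw [Complex.sq_norm, Complex.normSq_apply, Complex.sub_re,
      Complex.sub_im, Complex.one_re, Complex.one_im, Complex.exp_re, Complex.exp_im,
      hre, him]
    simp only [Real.exp_zero, one_mul]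
    have := Real.sin_sq_add_cos_sq (u * x)
    nlinarith [this, h2]
  -- Cauchy–Schwarz bound on the integral term
  set B := ∫ x, (x : ℂ) * (Complex.exp (Complex.I * u * x) - 1) ∂F with hB
  have hBnorm : ‖B‖ ≤ ∫ x, |x| * ‖Complex.exp (Complex.I * u * x) - 1‖ ∂F := by
    calc ‖B‖ ≤ ∫ x, ‖(x : ℂ) * (Complex.exp (Complex.I * u * x) - 1)‖ ∂F :=
          norm_integral_le_integral_norm _
      _ = ∫ x, |x| * ‖Complex.exp (Complex.I * u * x) - 1‖ ∂F := by
          congr 1; funext x; rw [norm_mul, Complex.norm_real, Real.norm_eq_abs]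
  have hfg : Integrable (fun x : ℝ => |x| * ‖Complex.exp (Complex.I * u * x) - 1‖) F := by
    have := hInt.norm
    simpa [norm_mul, Complex.norm_real, Real.norm_eq_abs] using this
  have hg2 : Integrable (fun x : ℝ => ‖Complex.exp (Complex.I * u * x) - 1‖ ^ 2) F := by
    have : Integrable (fun x => 4 * Real.sin (u * x / 2) ^ 2) F := hsin.const_mul 4
    exact this.congr (Filter.Eventually.of_forall fun x => (hnorm x).symm)
  have hf2 : Integrable (fun x => |x| ^ 2) F := by
    exact hF2.congr (Filter.Eventually.of_forall fun x => (_root_.sq_abs x).symm)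
  have hcs := cs_aux F (fun x => |x|) (fun x => ‖Complex.exp (Complex.I * u * x) - 1‖)
      hf2 hg2 hfg
  have hIf2 : (∫ x, |x| ^ 2 ∂F) = ∫ x, x ^ 2 ∂F := by
    congr 1; funext x; exact _root_.sq_abs x
  have hIg2 : (∫ x, ‖Complex.exp (Complex.I * u * x) - 1‖ ^ 2 ∂F)
      = 4 * ∫ x, Real.sin (u * x / 2) ^ 2 ∂F := by
    rw [← integral_const_mul]
    congr 1; funext x; exact hnorm x
  rw [hIf2, hIg2] at hcs
  have hB2 : ‖B‖ ^ 2 ≤ 4 * ∫ x, Real.sin (u * x / 2) ^ 2 ∂F := by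
    have h1 : ‖B‖ ^ 2 ≤ (∫ x, |x| * ‖Complex.exp (Complex.I * u * x) - 1‖ ∂F) ^ 2 := by
      apply pow_le_pow_left₀ (norm_nonneg _) hBnorm
    nlinarith [hcs, hx2le, hx2, hsin0, h1]
  -- norm of the drift term
  have hA : ‖Complex.I * (u : ℂ) * (c : ℂ)‖ = |u| * c := by
    rw [norm_mul, norm_mul, Complex.norm_I, Complex.norm_real, Complex.norm_real,
      Real.norm_eq_abs, Real.norm_eq_abs, _root_.abs_of_nonneg hc, one_mul]
  have htri : ‖Complex.I * (u : ℂ) * (c : ℂ) + B‖ ≤ |u| * c + ‖B‖ := by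
    calc ‖Complex.I * (u : ℂ) * (c : ℂ) + B‖ ≤ ‖Complex.I * (u : ℂ) * (c : ℂ)‖ + ‖B‖ :=
          norm_add_le _ _
      _ = |u| * c + ‖B‖ := by rw [hA]
  -- first inequality
  have habs : (0:ℝ) ≤ |u| := abs_nonneg u
  have hu2 : |u| ^ 2 = u ^ 2 := sq_abs u
  have key1 : ‖Complex.I * (u : ℂ) * (c : ℂ) + B‖ ^ 2
      ≤ 2 * (u ^ 2 * c + 4 * ∫ x, Real.sin (u * x / 2) ^ 2 ∂F) := by
    have h1 : ‖Complex.I * (u : ℂ) * (c : ℂ) + B‖ ^ 2 ≤ (|u| * c + ‖B‖) ^ 2 :=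
      pow_le_pow_left₀ (norm_nonneg _) htri 2
    have h2 : (|u| * c + ‖B‖) ^ 2 ≤ 2 * (|u| * c) ^ 2 + 2 * ‖B‖ ^ 2 := by
      nlinarith [sq_nonneg (|u| * c - ‖B‖)]
    have h3 : (|u| * c) ^ 2 ≤ u ^ 2 * c := by
      have he : (|u| * c) ^ 2 = u ^ 2 * c ^ 2 := by rw [mul_pow, hu2]
      have hp : 0 ≤ u ^ 2 * (c * (1 - c)) :=
        mul_nonneg (sq_nonneg u) (mul_nonneg hc (by linarith))
      nlinarith [he, hp]
    nlinarith [h1, h2, h3, hB2]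
  refine ⟨key1, ?_⟩
  -- second inequality
  have hsinle : (4 : ℝ) * ∫ x, Real.sin (u * x / 2) ^ 2 ∂F ≤ u ^ 2 * ∫ x, x ^ 2 ∂F := by
    rw [← integral_const_mul, ← integral_const_mul]
    apply integral_mono (hsin.const_mul 4) (hF2.const_mul _)
    intro x
    show 4 * Real.sin (u * x / 2) ^ 2 ≤ u ^ 2 * x ^ 2
    have h1 := Real.sin_sq_le_sq (x := u * x / 2)
    have h2 : (u * x / 2) ^ 2 = u ^ 2 * x ^ 2 / 4 := by ring
    linarith [h1, h2.le, h2.ge]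
  have hbound : ‖Complex.I * (u : ℂ) * (c : ℂ) + B‖ ^ 2 ≤ 2 * u ^ 2 := by
    have : u ^ 2 * c + 4 * ∫ x, Real.sin (u * x / 2) ^ 2 ∂F ≤ u ^ 2 := by
      nlinarith [hsinle, hsum, sq_nonneg u]
    nlinarith [key1, this]
  have hs2 : Real.sqrt 2 ^ 2 = 2 := Real.sq_sqrt (by norm_num)
  have hrhs : 2 * u ^ 2 ≤ (2 * Real.sqrt 2 * (1 + |u|)) ^ 2 := by
    have he : (2 * Real.sqrt 2 * (1 + |u|)) ^ 2 = 8 * (1 + |u|) ^ 2 := by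
      rw [mul_pow, mul_pow, hs2]; ring
    nlinarith [he, habs, hu2]
  have hy : (0:ℝ) ≤ 2 * Real.sqrt 2 * (1 + |u|) := by positivity
  have hfin := Real.sqrt_le_sqrt (le_trans hbound hrhs)
  rwa [Real.sqrt_sq (norm_nonneg _), Real.sqrt_sq hy] at hfin
end

section
/- If X is a square-integrable process with independent increments satisfying the structure condition, and X_b - X_a is deterministic (almost surely constant) for some 0 ≤ a < b ≤ T, then X_u = X_a almost surely for every u ∈ [a, b]. -/
open MeasureTheory ProbabilityTheory

theorem stmt10 {Ω : Type*} {m0 : MeasurableSpace Ω} (μ : Measure Ω) [IsProbabilityMeasure μ]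
    (X : ℝ → Ω → ℝ) (T a b : ℝ) (ha : 0 ≤ a) (hab : a < b) (hbT : b ≤ T)
    (hmeas : ∀ t, Measurable (X t))
    (hL2 : ∀ t, MemLp (X t) 2 μ)
    -- mean and variance functions of the PII:  E[X_t - X_s] = m t - m s,
    -- Var(X_t - X_s) = v t - v s (v is increasing and right continuous)
    (m : ℝ → ℝ) (v : StieltjesFunction ℝ)
    (hmean : ∀ s t : ℝ, s ≤ t → ∫ ω, (X t ω - X s ω) ∂μ = m t - m s)
    (hvar : ∀ s t : ℝ, s ≤ t → variance (fun ω => X t ω - X s ω) μ = v t - v s)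
    -- structure condition: dm ≪ dv with square integrable density α
    (hSC : ∃ α : ℝ → ℝ,
      (∀ s t : ℝ, s ≤ t → m t - m s = ∫ r in Set.Ioc s t, α r ∂v.measure) ∧
      IntegrableOn (fun r => (α r) ^ 2) (Set.Ioc 0 T) v.measure)
    -- the increment X_b - X_a is deterministic
    (hdet : ∃ c : ℝ, (fun ω => X b ω - X a ω) =ᵐ[μ] fun _ => c) :
    ∀ u ∈ Set.Icc a b, X u =ᵐ[μ] X a := by
  obtain ⟨c, hc⟩ := hdet
  obtain ⟨α, hα, -⟩ := hSC
  -- variance of X_b - X_a is 0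
  have hmemab : MemLp (fun ω => X b ω - X a ω) 2 μ := (hL2 b).sub (hL2 a)
  have hmeanc : ∫ ω, (X b ω - X a ω) ∂μ = c := by
    rw [integral_congr_ae hc]; simp
  have hvar0 : variance (fun ω => X b ω - X a ω) μ = 0 := by
    rw [variance]
    have : evariance (fun ω => X b ω - X a ω) μ = 0 := by
      rw [evariance_eq_zero_iff (X := fun ω => X b ω - X a ω) (((hmeas b).sub (hmeas a)).aemeasurable)]
      rw [hmeanc]
      exact hc
    rw [this]; simp
  have hvba : v b = v a := by
    have := hvar a b hab.le
    rw [hvar0] at this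
    linarith
  intro u hu
  obtain ⟨hau, hub⟩ := hu
  have hvua : v u = v a := le_antisymm (hvba ▸ v.mono hub) (v.mono hau)
  -- v.measure (Ioc a u) = 0
  have hmeas0 : v.measure (Set.Ioc a u) = 0 := by
    rw [v.measure_Ioc, hvua]; simp
  -- mean of X_u - X_a is 0
  have hmean0 : ∫ ω, (X u ω - X a ω) ∂μ = 0 := by
    rw [hmean a u hau, hα a u hau, Measure.restrict_eq_zero.mpr hmeas0, integral_zero_measure]
  -- variance of X_u - X_a is 0
  have hvaru : variance (fun ω => X u ω - X a ω) μ = 0 := by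
    rw [hvar a u hau, hvua]; ring
  have hmemau : MemLp (fun ω => X u ω - X a ω) 2 μ := (hL2 u).sub (hL2 a)
  have hev : evariance (fun ω => X u ω - X a ω) μ = 0 := by
    have hlt := hmemau.evariance_lt_top
    rw [variance] at hvaru
    exact (ENNReal.toReal_eq_zero_iff _).mp hvaru |>.resolve_right hlt.ne
  have := (evariance_eq_zero_iff (X := fun ω => X u ω - X a ω) (((hmeas u).sub (hmeas a)).aemeasurable)).mp hev
  rw [hmean0] at this
  filter_upwards [this] with ω hω
  have : X u ω - X a ω = 0 := hω
  linarith
end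

section
/- Let X be a square-integrable process with independent increments and μ a finite complex measure on ℝ. Define f(x) = ∫ e^{iux} dμ(u) and ε_{t,T}(u) = exp(Ψ_T(u) - Ψ_t(u)). Then for all t ∈ [0,T], E[f(X_T) | F_t] = e_{t,T}(X_t) almost surely, where e_{t,T}(x) = ∫ e^{iux} ε_{t,T}(u) dμ(u). -/
open Complex MeasureTheory ProbabilityTheory
set_option maxHeartbeats 1000000

lemma norm_exp_I_mul (u x : ℝ) : ‖Complex.exp (Complex.I * u * x)‖ = 1 := by
  rw [Complex.norm_exp]
  simp [Complex.mul_re]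

lemma indepFun_integral_mul_complex {Ω : Type*} {mΩ : MeasurableSpace Ω} {μ : Measure Ω}
    {f g : Ω → ℂ} (h : IndepFun f g μ)
    (hf : Integrable f μ) (hg : Integrable g μ) (hfg : Integrable (fun ω => f ω * g ω) μ) :
    ∫ ω, f ω * g ω ∂μ = (∫ ω, f ω ∂μ) * ∫ ω, g ω ∂μ := by
  have mre : ∀ {F : Ω → ℂ}, Integrable F μ → AEStronglyMeasurable (fun ω => (F ω).re) μ :=
    fun hF => (Complex.measurable_re.comp_aemeasurable hF.1.aemeasurable).aestronglyMeasurable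
  have mim : ∀ {F : Ω → ℂ}, Integrable F μ → AEStronglyMeasurable (fun ω => (F ω).im) μ :=
    fun hF => (Complex.measurable_im.comp_aemeasurable hF.1.aemeasurable).aestronglyMeasurable
  have hintc : ∀ (p q : Ω → ℝ), AEStronglyMeasurable p μ → AEStronglyMeasurable q μ →
      (∀ ω, |p ω| ≤ ‖f ω‖) → (∀ ω, |q ω| ≤ ‖g ω‖) → Integrable (fun ω => p ω * q ω) μ := by
    intro p q hp hq hbp hbq
    refine Integrable.mono hfg (hp.mul hq) (Filter.Eventually.of_forall fun ω => ?_)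
    simp only [Real.norm_eq_abs, abs_mul, norm_mul]
    exact mul_le_mul (hbp ω) (hbq ω) (abs_nonneg _) (norm_nonneg _)
  have hrr := hintc _ _ (mre hf) (mre hg) (fun ω => Complex.abs_re_le_norm _) (fun ω => Complex.abs_re_le_norm _)
  have hii := hintc _ _ (mim hf) (mim hg) (fun ω => Complex.abs_im_le_norm _) (fun ω => Complex.abs_im_le_norm _)
  have hri := hintc _ _ (mre hf) (mim hg) (fun ω => Complex.abs_re_le_norm _) (fun ω => Complex.abs_im_le_norm _)
  have hir := hintc _ _ (mim hf) (mre hg) (fun ω => Complex.abs_im_le_norm _) (fun ω => Complex.abs_re_le_norm _)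
  have irr : ∫ ω, (f ω).re * (g ω).re ∂μ = (∫ ω, (f ω).re ∂μ) * ∫ ω, (g ω).re ∂μ :=
    IndepFun.integral_fun_mul_eq_mul_integral (h.comp Complex.measurable_re Complex.measurable_re) (mre hf) (mre hg)
  have iii : ∫ ω, (f ω).im * (g ω).im ∂μ = (∫ ω, (f ω).im ∂μ) * ∫ ω, (g ω).im ∂μ :=
    IndepFun.integral_fun_mul_eq_mul_integral (h.comp Complex.measurable_im Complex.measurable_im) (mim hf) (mim hg)
  have iri : ∫ ω, (f ω).re * (g ω).im ∂μ = (∫ ω, (f ω).re ∂μ) * ∫ ω, (g ω).im ∂μ :=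
    IndepFun.integral_fun_mul_eq_mul_integral (h.comp Complex.measurable_re Complex.measurable_im) (mre hf) (mim hg)
  have iir : ∫ ω, (f ω).im * (g ω).re ∂μ = (∫ ω, (f ω).im ∂μ) * ∫ ω, (g ω).re ∂μ :=
    IndepFun.integral_fun_mul_eq_mul_integral (h.comp Complex.measurable_im Complex.measurable_re) (mim hf) (mre hg)
  have ir : ∀ (F : Ω → ℂ), Integrable F μ → (∫ ω, F ω ∂μ).re = ∫ ω, (F ω).re ∂μ := by
    intro F hF; simpa using (integral_re hF).symm
  have iim : ∀ (F : Ω → ℂ), Integrable F μ → (∫ ω, F ω ∂μ).im = ∫ ω, (F ω).im ∂μ := by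
    intro F hF; simpa using (integral_im hF).symm
  apply Complex.ext
  · rw [ir _ hfg, Complex.mul_re, ir _ hf, ir _ hg, iim _ hf, iim _ hg, ← irr, ← iii]
    rw [show (fun ω => (f ω * g ω).re) = fun ω => (f ω).re * (g ω).re - (f ω).im * (g ω).im from
      funext fun ω => Complex.mul_re _ _]
    exact integral_sub hrr hii
  · rw [iim _ hfg, Complex.mul_im, ir _ hf, ir _ hg, iim _ hf, iim _ hg, ← iri, ← iir]
    rw [show (fun ω => (f ω * g ω).im) = fun ω => (f ω).re * (g ω).im + (f ω).im * (g ω).re from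
      funext fun ω => Complex.mul_im _ _]
    exact integral_add hri hir


theorem stmt11 {Ω : Type*} {m0 : MeasurableSpace Ω} (μ : Measure Ω) [IsProbabilityMeasure μ]
    (ℱ : Filtration ℝ m0) (X : ℝ → Ω → ℝ) (Ψ : ℝ → ℝ → ℂ) (T : ℝ)
    (hX0 : ∀ ω, X 0 ω = 0)
    (hadapted : Adapted ℱ X)
    (hmeas : ∀ t, Measurable (X t))
    (hL2 : ∀ t, MemLp (X t) 2 μ)
    (hindep : ∀ s t : ℝ, s ≤ t →
      Indep (MeasurableSpace.comap (fun ω => X t ω - X s ω) inferInstance) (ℱ s) μ)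
    (hcharInc : ∀ s t : ℝ, s ≤ t → ∀ u : ℝ,
      ∫ ω, Complex.exp (Complex.I * u * (X t ω - X s ω)) ∂μ
        = Complex.exp (Ψ t u - Ψ s u))
    -- H = f(X_T) with f the Fourier transform of a finite complex measure ρ dν
    (ν : Measure ℝ) [IsFiniteMeasure ν] (ρ : ℝ → ℂ) (hρ : Integrable ρ ν)
    (t : ℝ) (ht : t ∈ Set.Icc (0 : ℝ) T) :
    μ[fun ω => ∫ u, Complex.exp (Complex.I * u * X T ω) * ρ u ∂ν | ℱ t]
      =ᵐ[μ] fun ω => ∫ u,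
        Complex.exp (Complex.I * u * X t ω) * Complex.exp (Ψ T u - Ψ t u) * ρ u ∂ν := by
  have htT : t ≤ T := ht.2
  obtain ⟨ρ', hρ'm, hρρ'⟩ : ∃ ρ', StronglyMeasurable ρ' ∧ ρ =ᵐ[ν] ρ' :=
    ⟨hρ.1.mk ρ, hρ.1.stronglyMeasurable_mk, hρ.1.ae_eq_mk⟩
  have hρ' : Integrable ρ' ν := hρ.congr hρρ'
  set ε : ℝ → ℂ := fun u => ∫ ω, Complex.exp (Complex.I * u * (X T ω - X t ω)) ∂μ with hε_def
  have hε : ∀ u, ε u = Complex.exp (Ψ T u - Ψ t u) := fun u => hcharInc t T htT u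
  set f : Ω → ℂ := fun ω => ∫ u, Complex.exp (Complex.I * u * X T ω) * ρ' u ∂ν with hf_def
  set g : Ω → ℂ := fun ω => ∫ u, Complex.exp (Complex.I * u * X t ω) * ε u * ρ' u ∂ν with hg_def
  -- rewrite the goal in terms of f and g
  have hfeq : (fun ω => ∫ u, Complex.exp (Complex.I * u * X T ω) * ρ u ∂ν) = f := by
    funext ω
    exact integral_congr_ae (by filter_upwards [hρρ'] with u hu; rw [hu])
  have hgeq : (fun ω => ∫ u, Complex.exp (Complex.I * u * X t ω)
      * Complex.exp (Ψ T u - Ψ t u) * ρ u ∂ν) = g := by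
    funext ω
    exact integral_congr_ae (by filter_upwards [hρρ'] with u hu; rw [hu, hε])
  rw [hfeq, hgeq]
  -- norm facts
  have hnorm1 : ∀ (u x : ℝ), ‖Complex.exp (Complex.I * u * x)‖ = 1 := by
    intro u x
    rw [Complex.norm_exp]
    simp [Complex.mul_re]
  have hεle : ∀ u, ‖ε u‖ ≤ 1 := by
    intro u
    calc ‖ε u‖ ≤ ∫ ω, ‖Complex.exp (Complex.I * u * (X T ω - X t ω))‖ ∂μ :=
          norm_integral_le_integral_norm _
    _ = ∫ _ω, (1:ℝ) ∂μ := by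
          apply integral_congr_ae
          filter_upwards with ω
          rw [← Complex.ofReal_sub]
          exact hnorm1 _ _
    _ = 1 := by simp
  -- measurability of ε
  have hεm : StronglyMeasurable ε := by
    apply MeasureTheory.StronglyMeasurable.integral_prod_right' (f := fun p : ℝ × Ω =>
      Complex.exp (Complex.I * p.1 * (X T p.2 - X t p.2)))
    apply Measurable.stronglyMeasurable
    exact Complex.measurable_exp.comp ((measurable_const.mul
      (Complex.measurable_ofReal.comp measurable_fst)).mul
      ((Complex.measurable_ofReal.comp ((hmeas T).comp measurable_snd)).sub
        (Complex.measurable_ofReal.comp ((hmeas t).comp measurable_snd))))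
  set C : ℝ := ∫ u, ‖ρ' u‖ ∂ν with hC_def
  -- measurability of f
  have hfm : StronglyMeasurable f := by
    apply MeasureTheory.StronglyMeasurable.integral_prod_right' (f := fun p : Ω × ℝ =>
      Complex.exp (Complex.I * p.2 * X T p.1) * ρ' p.2)
    apply Measurable.stronglyMeasurable
    exact (Complex.measurable_exp.comp ((measurable_const.mul
      (Complex.measurable_ofReal.comp measurable_snd)).mul
      (Complex.measurable_ofReal.comp ((hmeas T).comp measurable_fst)))).mul
      (hρ'm.measurable.comp measurable_snd)
  -- measurability of g with respect to ℱ t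
  have hGm : StronglyMeasurable (fun x : ℝ => ∫ u, Complex.exp (Complex.I * u * x) * ε u * ρ' u ∂ν) := by
    apply MeasureTheory.StronglyMeasurable.integral_prod_right' (f := fun p : ℝ × ℝ =>
      Complex.exp (Complex.I * p.2 * p.1) * ε p.2 * ρ' p.2)
    apply Measurable.stronglyMeasurable
    exact ((Complex.measurable_exp.comp ((measurable_const.mul
      (Complex.measurable_ofReal.comp measurable_snd)).mul
      (Complex.measurable_ofReal.comp measurable_fst))).mul
      (hεm.measurable.comp measurable_snd)).mul (hρ'm.measurable.comp measurable_snd)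
  have hgm : AEStronglyMeasurable[ℱ t] g μ :=
    ⟨g, hGm.comp_measurable (hadapted t), Filter.EventuallyEq.rfl⟩
  -- bounds for f and g
  have hfbd : ∀ ω, ‖f ω‖ ≤ C := by
    intro ω
    calc ‖f ω‖ ≤ ∫ u, ‖Complex.exp (Complex.I * u * X T ω) * ρ' u‖ ∂ν :=
          norm_integral_le_integral_norm _
    _ = C := by
        apply integral_congr_ae
        filter_upwards with u
        rw [norm_mul, hnorm1, one_mul]
  have hgbd : ∀ ω, ‖g ω‖ ≤ C := by
    intro ω
    calc ‖g ω‖ ≤ ∫ u, ‖Complex.exp (Complex.I * u * X t ω) * ε u * ρ' u‖ ∂ν :=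
          norm_integral_le_integral_norm _
    _ ≤ C := by
        apply integral_mono_of_nonneg (Filter.Eventually.of_forall fun u => norm_nonneg _)
          hρ'.norm
        filter_upwards with u
        simp only [norm_mul, hnorm1, one_mul]
        calc ‖ε u‖ * ‖ρ' u‖ ≤ 1 * ‖ρ' u‖ :=
              mul_le_mul_of_nonneg_right (hεle u) (norm_nonneg _)
        _ = ‖ρ' u‖ := one_mul _
  have hf_int : Integrable f μ := by
    refine Integrable.mono' (integrable_const C) hfm.aestronglyMeasurable
      (Filter.Eventually.of_forall fun ω => hfbd ω)
  have hg_int : Integrable g μ := by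
    refine Integrable.mono' (integrable_const C)
      (hGm.comp_measurable (hmeas t)).aestronglyMeasurable
      (Filter.Eventually.of_forall fun ω => hgbd ω)
  -- the key independence identity
  have key : ∀ (s : Set Ω), MeasurableSet[ℱ t] s → ∀ u : ℝ,
      ∫ ω in s, Complex.exp (Complex.I * u * X T ω) ∂μ
        = ε u * ∫ ω in s, Complex.exp (Complex.I * u * X t ω) ∂μ := by
    intro s hs u
    set Y : Ω → ℂ := fun ω => Complex.exp (Complex.I * u * ((X T ω : ℂ) - (X t ω : ℂ)))
      with hY_def
    set Z : Ω → ℂ := s.indicator (fun ω => Complex.exp (Complex.I * u * X t ω)) with hZ_def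
    have hYmeas : Measurable[MeasurableSpace.comap (fun ω => X T ω - X t ω) inferInstance] Y := by
      have h1 : Measurable[MeasurableSpace.comap (fun ω => X T ω - X t ω) inferInstance]
          (fun ω => X T ω - X t ω) := measurable_iff_comap_le.mpr le_rfl
      have : Y = fun ω => Complex.exp (Complex.I * u * ((X T ω - X t ω : ℝ) : ℂ)) := by
        funext ω; rw [hY_def]; push_cast; ring_nf
      rw [this]
      exact Complex.measurable_exp.comp
        (measurable_const.mul (Complex.measurable_ofReal.comp h1))
    have hZmeas : Measurable[ℱ t] Z :=
      (Complex.measurable_exp.comp (measurable_const.mul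
        (Complex.measurable_ofReal.comp (hadapted t)))).indicator hs
    have hIndepYZ : IndepFun Y Z μ := by
      rw [IndepFun_iff_Indep]
      exact indep_of_indep_of_le_right
        (indep_of_indep_of_le_left (hindep t T htT) (measurable_iff_comap_le.mp hYmeas))
        (measurable_iff_comap_le.mp hZmeas)
    have hYm0 : Measurable Y := hYmeas.mono (by
      exact measurable_iff_comap_le.mp (((hmeas T).sub (hmeas t)) : Measurable _)) le_rfl
    have hZm0 : Measurable Z := hZmeas.mono (ℱ.le t) le_rfl
    have hYn : ∀ ω, ‖Y ω‖ = 1 := by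
      intro ω
      show ‖Complex.exp (Complex.I * u * ((X T ω : ℂ) - (X t ω : ℂ)))‖ = 1
      rw [← Complex.ofReal_sub]
      exact hnorm1 _ _
    have hZn : ∀ ω, ‖Z ω‖ ≤ 1 := by
      intro ω
      rw [hZ_def]
      by_cases hω : ω ∈ s
      · rw [Set.indicator_of_mem hω, hnorm1]
      · rw [Set.indicator_of_notMem hω]; simp
    have hYint : Integrable Y μ := by
      refine Integrable.mono' (integrable_const 1) hYm0.aestronglyMeasurable
        (Filter.Eventually.of_forall fun ω => (hYn ω).le)
    have hZint : Integrable Z μ := by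
      refine Integrable.mono' (integrable_const 1) hZm0.aestronglyMeasurable
        (Filter.Eventually.of_forall fun ω => hZn ω)
    have hZYint : Integrable (fun ω => Z ω * Y ω) μ := by
      refine Integrable.mono' (integrable_const 1)
        (hZm0.mul hYm0).aestronglyMeasurable
        (Filter.Eventually.of_forall fun ω => ?_)
      rw [norm_mul, hYn, mul_one]; exact hZn ω
    calc ∫ ω in s, Complex.exp (Complex.I * u * X T ω) ∂μ
        = ∫ ω, Z ω * Y ω ∂μ := by
          rw [← integral_indicator (ℱ.le t _ hs)]
          apply integral_congr_ae
          filter_upwards with ω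
          by_cases hω : ω ∈ s
          · rw [Set.indicator_of_mem hω, hZ_def, Set.indicator_of_mem hω, hY_def,
              ← Complex.exp_add]
            congr 1
            ring
          · rw [Set.indicator_of_notMem hω, hZ_def, Set.indicator_of_notMem hω, zero_mul]
      _ = (∫ ω, Z ω ∂μ) * ∫ ω, Y ω ∂μ :=
          indepFun_integral_mul_complex hIndepYZ.symm hZint hYint hZYint
      _ = ε u * ∫ ω in s, Complex.exp (Complex.I * u * X t ω) ∂μ := by
          rw [hZ_def, integral_indicator (ℱ.le t _ hs)]
          rw [show (∫ ω, Y ω ∂μ) = ε u from rfl]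
          ring
  -- Fubini swap
  have hswap : ∀ (s : Set Ω), MeasurableSet[ℱ t] s → ∀ (r : ℝ) (w : ℝ → ℂ), Measurable w →
      (∀ u, ‖w u‖ ≤ 1) →
      ∫ ω in s, ∫ u, Complex.exp (Complex.I * u * X r ω) * w u * ρ' u ∂ν ∂μ
        = ∫ u, (∫ ω in s, Complex.exp (Complex.I * u * X r ω) ∂μ) * (w u * ρ' u) ∂ν := by
    intro s hs r w hw hwle
    have hkm : Measurable (fun p : Ω × ℝ =>
        Complex.exp (Complex.I * p.2 * X r p.1) * w p.2 * ρ' p.2) := by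
      exact ((Complex.measurable_exp.comp ((measurable_const.mul
        (Complex.measurable_ofReal.comp measurable_snd)).mul
        (Complex.measurable_ofReal.comp ((hmeas r).comp measurable_fst)))).mul
        (hw.comp measurable_snd)).mul (hρ'm.measurable.comp measurable_snd)
    have hnk : ∀ (ω : Ω) (u : ℝ), ‖Complex.exp (Complex.I * u * X r ω) * w u * ρ' u‖ ≤ ‖ρ' u‖ := by
      intro ω u
      simp only [norm_mul, hnorm1, one_mul]
      calc ‖w u‖ * ‖ρ' u‖ ≤ 1 * ‖ρ' u‖ :=
            mul_le_mul_of_nonneg_right (hwle u) (norm_nonneg _)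
      _ = ‖ρ' u‖ := one_mul _
    have hint : Integrable (Function.uncurry fun (ω : Ω) (u : ℝ) =>
        Complex.exp (Complex.I * u * X r ω) * w u * ρ' u) ((μ.restrict s).prod ν) := by
      rw [show Function.uncurry (fun (ω : Ω) (u : ℝ) =>
          Complex.exp (Complex.I * u * X r ω) * w u * ρ' u)
        = fun p : Ω × ℝ => Complex.exp (Complex.I * p.2 * X r p.1) * w p.2 * ρ' p.2 from rfl]
      rw [integrable_prod_iff hkm.aestronglyMeasurable]
      constructor
      · filter_upwards with ω
        exact hρ'.bdd_mul ((Complex.measurable_exp.comp ((measurable_const.mul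
          Complex.measurable_ofReal).mul measurable_const)).mul hw).aestronglyMeasurable
          (Filter.Eventually.of_forall fun u => by rw [norm_mul, hnorm1, one_mul]; exact hwle u)
      · refine Integrable.mono' (integrable_const C) ?_
          (Filter.Eventually.of_forall fun ω => ?_)
        · apply StronglyMeasurable.aestronglyMeasurable
          apply MeasureTheory.StronglyMeasurable.integral_prod_right'
            (f := fun p : Ω × ℝ => ‖Complex.exp (Complex.I * p.2 * X r p.1) * w p.2 * ρ' p.2‖)
          exact hkm.norm.stronglyMeasurable
        · rw [Real.norm_eq_abs, _root_.abs_of_nonneg (integral_nonneg fun u => norm_nonneg _)]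
          refine integral_mono_of_nonneg (Filter.Eventually.of_forall fun u => norm_nonneg _)
            hρ'.norm (Filter.Eventually.of_forall fun u => hnk ω u)
    calc ∫ ω in s, ∫ u, Complex.exp (Complex.I * u * X r ω) * w u * ρ' u ∂ν ∂μ
        = ∫ u, ∫ ω in s, Complex.exp (Complex.I * u * X r ω) * w u * ρ' u ∂μ ∂ν :=
          integral_integral_swap hint
      _ = ∫ u, (∫ ω in s, Complex.exp (Complex.I * u * X r ω) ∂μ) * (w u * ρ' u) ∂ν := by
          apply integral_congr_ae
          filter_upwards with u
          rw [show (fun ω => Complex.exp (Complex.I * u * X r ω) * w u * ρ' u)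
              = fun ω => Complex.exp (Complex.I * u * X r ω) * (w u * ρ' u) from
            funext fun ω => mul_assoc _ _ _]
          exact integral_mul_const _ _
  -- set integral equality
  have hg_eq : ∀ (s : Set Ω), MeasurableSet[ℱ t] s →
      ∫ ω in s, g ω ∂μ = ∫ ω in s, f ω ∂μ := by
    intro s hs
    have hfs : ∫ ω in s, f ω ∂μ
        = ∫ u, (∫ ω in s, Complex.exp (Complex.I * u * X T ω) ∂μ) * ((1:ℂ) * ρ' u) ∂ν := by
      rw [← hswap s hs T (fun _ => 1) measurable_const (by simp)]
      simp only [mul_one]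
      rfl
    rw [hg_def, hswap s hs t ε hεm.measurable hεle, hfs]
    apply integral_congr_ae
    filter_upwards with u
    rw [key s hs u]
    ring
  exact (ae_eq_condExp_of_forall_setIntegral_eq (ℱ.le t) hf_int
    (fun s hs hμs => hg_int.integrableOn) (fun s hs hμs => hg_eq s hs) hgm).symm
end
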